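/- Let ℓ, n, k ∈ ℕ with k ≤ n ≤ 2^ℓ, let R = k/n, and let 0 ≤ s ≤ n. Let D be the distribution on 𝔽_{2^ℓ}ⁿ obtained as follows: sample a uniform codeword c of the Reed–Solomon code over 𝔽_{2^ℓ} with dimension k and block length n (i.e., the encoding of a uniformly random message in 𝔽_{2^ℓ}^k); sample a uniformly random subset S ⊆ {1,…,n} with |S| = s; for each i ∈ S replace cᵢ by an independent uniformly random element of 𝔽_{2^ℓ}; output the result. Then D is (1 − R)^s-small-biased. -/

import Mathlib

open Finset

set_option linter.unusedSectionVars false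
set_option maxHeartbeats 1000000

/-- `(-1)^(Tr y)` where `Tr : 𝔽_{2^ℓ} → 𝔽₂`, `Tr y = y + y² + y⁴ + ⋯ + y^(2^(ℓ-1))`,
is the field trace (which takes values in {0,1}). -/
def chr {F : Type*} [Field F] [DecidableEq F] (ℓ : ℕ) (y : F) : ℝ :=
  if (∑ i ∈ Finset.range ℓ, y ^ (2 ^ i)) = 0 then 1 else -1

/-- `bias(X, α) = |E_{x←X} (-1)^(Tr ⟨x,α⟩)|`. -/
noncomputable def bias {F : Type*} [Field F] [DecidableEq F] [Fintype F] (ℓ n : ℕ)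
    (p : (Fin n → F) → ℝ) (α : Fin n → F) : ℝ :=
  |∑ x, p x * chr ℓ (∑ i, x i * α i)|

/-- Reed–Solomon encoding with dimension `k`, block length `n` and (distinct)
evaluation points `a : Fin n → F`:  `m ↦ (f_m(a₁), …, f_m(a_n))`. -/
def rsEnc {F : Type*} [Field F] (k n : ℕ) (a : Fin n → F) (m : Fin k → F) : Fin n → F :=
  fun i => ∑ j : Fin k, m j * a i ^ (j : ℕ)


section Aux
variable {F : Type*} [Field F] [Fintype F] [DecidableEq F] {ℓ : ℕ}

lemma charF (hF : Fintype.card F = 2 ^ ℓ) : CharP F 2 := by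
  have hp : (ringChar F).Prime := CharP.char_is_prime F _
  have hd : ringChar F ∣ Fintype.card F := by
    classical
    exact (CharP.cast_eq_zero_iff F (ringChar F) (Fintype.card F)).mp
      (by exact_mod_cast FiniteField.cast_card_eq_zero F)
  rw [hF] at hd
  have h2 : ringChar F = 2 :=
    (Nat.prime_dvd_prime_iff_eq hp Nat.prime_two).mp (Nat.Prime.dvd_of_dvd_pow hp hd)
  rw [← h2]; exact ringChar.charP F

lemma ell_pos (hF : Fintype.card F = 2 ^ ℓ) : 1 ≤ ℓ := by
  by_contra h
  have : ℓ = 0 := by omega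
  rw [this] at hF
  have := Fintype.one_lt_card (α := F)
  omega

lemma chr_zero_eq : chr ℓ (0 : F) = 1 := by
  simp [chr, zero_pow, (pow_pos (two_pos : (0:ℕ) < 2) _).ne']

lemma tr_add (hF : Fintype.card F = 2 ^ ℓ) (x y : F) :
    (∑ i ∈ Finset.range ℓ, (x + y) ^ (2 ^ i)) =
      (∑ i ∈ Finset.range ℓ, x ^ (2 ^ i)) + (∑ i ∈ Finset.range ℓ, y ^ (2 ^ i)) := by
  haveI := charF hF
  haveI : Fact (Nat.Prime 2) := ⟨Nat.prime_two⟩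
  rw [← Finset.sum_add_distrib]
  exact Finset.sum_congr rfl fun i _ => add_pow_char_pow (R := F) (p := 2) x y i

lemma tr_val (hF : Fintype.card F = 2 ^ ℓ) (z : F) :
    (∑ i ∈ Finset.range ℓ, z ^ (2 ^ i)) = 0 ∨ (∑ i ∈ Finset.range ℓ, z ^ (2 ^ i)) = 1 := by
  haveI := charF hF
  set T := ∑ i ∈ Finset.range ℓ, z ^ (2 ^ i) with hT
  have hsq : T ^ 2 = T := by
    rw [hT, CharTwo.sum_sq]
    have h1 : ∀ i ∈ Finset.range ℓ, (z ^ 2 ^ i) ^ 2 = z ^ 2 ^ (i + 1) := by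
      intro i _
      rw [← pow_mul, pow_succ]
    rw [Finset.sum_congr rfl h1]
    have hshift : ∑ i ∈ Finset.range ℓ, z ^ 2 ^ (i + 1) =
        (∑ i ∈ Finset.range (ℓ + 1), z ^ 2 ^ i) - z ^ 2 ^ 0 := by
      rw [Finset.sum_range_succ' (fun i => z ^ 2 ^ i) ℓ]
      ring
    have hzq : z ^ 2 ^ ℓ = z := by rw [← hF]; exact FiniteField.pow_card z
    rw [hshift, Finset.sum_range_succ, hzq, pow_zero, pow_one, add_sub_cancel_right]
  have h0 : T * (T - 1) = 0 := by rw [mul_sub, mul_one, ← pow_two, hsq, sub_self]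
  rcases mul_eq_zero.mp h0 with h | h
  · exact Or.inl h
  · exact Or.inr (sub_eq_zero.mp h)

lemma chr_add (hF : Fintype.card F = 2 ^ ℓ) (x y : F) :
    chr ℓ (x + y) = chr ℓ x * chr ℓ y := by
  haveI := charF hF
  unfold chr
  rw [tr_add hF]
  rcases tr_val hF x with h1 | h1 <;> rcases tr_val hF y with h2 | h2 <;>
    rw [h1, h2] <;> simp [CharTwo.add_self_eq_zero, one_ne_zero]

end Aux

section Aux2
variable {F : Type*} [Field F] [Fintype F] [DecidableEq F] {ℓ : ℕ}
open Polynomial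

lemma exists_chr_neg_one (hF : Fintype.card F = 2 ^ ℓ) : ∃ z : F, chr ℓ z = -1 := by
  haveI := charF hF
  have hℓ : 1 ≤ ℓ := ell_pos hF
  by_contra h
  push_neg at h
  have hall : ∀ z : F, (∑ i ∈ Finset.range ℓ, z ^ (2 ^ i)) = 0 := by
    intro z
    by_contra hz
    exact h z (by simp [chr, hz])
  -- polynomial argument
  set p : F[X] := ∑ i ∈ Finset.range ℓ, (X : F[X]) ^ (2 ^ i) with hp
  have hpne : p ≠ 0 := by
    intro h0
    have hc : p.coeff 1 = 1 := by
      rw [hp, Polynomial.finset_sum_coeff]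
      rw [Finset.sum_eq_single 0]
      · simp
      · intro i hi hne
        have h2i : 1 < 2 ^ i := Nat.one_lt_two_pow hne
        rw [Polynomial.coeff_X_pow, if_neg (by omega)]
      · intro h0'
        exact absurd (Finset.mem_range.mpr hℓ) h0'
    rw [h0] at hc
    simp at hc
  have hdeg : p.natDegree < Fintype.card F := by
    have h1 : p.natDegree ≤ 2 ^ (ℓ - 1) := by
      rw [hp]
      refine Polynomial.natDegree_sum_le_of_forall_le _ _ ?_
      intro i hi
      refine (Polynomial.natDegree_X_pow_le _).trans ?_
      exact Nat.pow_le_pow_right (by norm_num) (Nat.le_sub_one_of_lt (Finset.mem_range.mp hi))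
    have h2 : (2:ℕ) ^ (ℓ - 1) < 2 ^ ℓ := Nat.pow_lt_pow_right (by norm_num) (by omega)
    omega
  have hsub : (Finset.univ : Finset F).val ⊆ p.roots := by
    intro z hz
    rw [Polynomial.mem_roots hpne]
    have : p.eval z = 0 := by
      rw [hp]
      simp only [Polynomial.eval_finset_sum, Polynomial.eval_pow, Polynomial.eval_X]
      exact hall z
    exact this
  have := Polynomial.card_le_degree_of_subset_roots hsub
  simp only [Finset.card_univ] at this
  omega

end Aux2

section Aux3
variable {F : Type*} [Field F] [Fintype F] [DecidableEq F] {ℓ : ℕ}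

lemma sum_chr (hF : Fintype.card F = 2 ^ ℓ) {ι : Type*} [Fintype ι] [DecidableEq ι] (γ : ι → F) :
    ∑ v : ι → F, chr ℓ (∑ i, v i * γ i) =
      if γ = 0 then ((Fintype.card F : ℝ)) ^ (Fintype.card ι) else 0 := by
  by_cases hγ : γ = 0
  · subst hγ
    simp only [Pi.zero_apply, mul_zero, Finset.sum_const_zero, chr_zero_eq, if_pos rfl]
    rw [Finset.sum_const, Finset.card_univ, Fintype.card_fun]
    simp
  · rw [if_neg hγ]
    obtain ⟨i0, hi0⟩ : ∃ i0, γ i0 ≠ 0 := by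
      by_contra h
      push_neg at h
      exact hγ (funext h)
    obtain ⟨z, hz⟩ := exists_chr_neg_one hF
    set δ : ι → F := fun i => if i = i0 then z / γ i0 else 0 with hδ
    have hδγ : ∑ i, δ i * γ i = z := by
      rw [hδ]
      rw [Finset.sum_eq_single i0]
      · simp [div_mul_cancel₀ _ hi0]
      · intro i _ hne; simp [hne]
      · intro h; exact absurd (Finset.mem_univ i0) h
    have key : ∀ v : ι → F, chr ℓ (∑ i, (v + δ) i * γ i) = - chr ℓ (∑ i, v i * γ i) := by
      intro v
      have : ∑ i, (v + δ) i * γ i = (∑ i, v i * γ i) + z := by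
        simp only [Pi.add_apply, add_mul, Finset.sum_add_distrib, hδγ]
      rw [this, chr_add hF, hz, mul_neg_one]
    have hshift : ∑ v : ι → F, chr ℓ (∑ i, (v + δ) i * γ i)
        = ∑ v : ι → F, chr ℓ (∑ i, v i * γ i) :=
      Fintype.sum_equiv (Equiv.addRight δ) _ _ (fun v => rfl)
    have h2 : ∑ v : ι → F, chr ℓ (∑ i, v i * γ i) = - ∑ v : ι → F, chr ℓ (∑ i, v i * γ i) := by
      conv_lhs => rw [← hshift, Finset.sum_congr rfl (fun v _ => key v)]
      rw [Finset.sum_neg_distrib]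
    linarith

end Aux3

lemma descFactorial_mul_pow_le (z n s : ℕ) (hzn : z ≤ n) :
    z.descFactorial s * n ^ s ≤ n.descFactorial s * z ^ s := by
  induction s with
  | zero => simp
  | succ s ih =>
    rw [Nat.descFactorial_succ, Nat.descFactorial_succ, pow_succ, pow_succ]
    have key : (z - s) * n ≤ (n - s) * z := by
      have h1 : (z - s) * n = z * n - s * n := Nat.sub_mul z s n
      have h2 : (n - s) * z = n * z - s * z := Nat.sub_mul n s z
      have h3 : s * z ≤ s * n := Nat.mul_le_mul_left s hzn
      have h4 : z * n = n * z := Nat.mul_comm z n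
      omega
    calc (z - s) * z.descFactorial s * (n ^ s * n)
        = ((z - s) * n) * (z.descFactorial s * n ^ s) := by ring
      _ ≤ ((n - s) * z) * (n.descFactorial s * z ^ s) := Nat.mul_le_mul key ih
      _ = (n - s) * n.descFactorial s * (z ^ s * z) := by ring

lemma choose_ratio_le (n s z k : ℕ) (hn : 0 < n) (hs : s ≤ n) (hzk : z + k ≤ n) :
    (z.choose s : ℝ) / (n.choose s : ℝ) ≤ (1 - (k : ℝ) / n) ^ s := by
  have hzn : z ≤ n := by omega
  have hN : z.choose s * n ^ s ≤ n.choose s * z ^ s := by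
    have h := descFactorial_mul_pow_le z n s hzn
    rw [Nat.descFactorial_eq_factorial_mul_choose, Nat.descFactorial_eq_factorial_mul_choose] at h
    rw [Nat.mul_assoc, Nat.mul_assoc] at h
    exact Nat.le_of_mul_le_mul_left h (Nat.factorial_pos s)
  have hnR : (0:ℝ) < (n:ℝ) := by exact_mod_cast hn
  have hchoosen : (0:ℝ) < (n.choose s : ℝ) := by
    exact_mod_cast Nat.choose_pos hs
  have hpow : (0:ℝ) < (n:ℝ) ^ s := pow_pos hnR s
  have step1 : (z.choose s : ℝ) / (n.choose s : ℝ) ≤ ((z:ℝ) / n) ^ s := by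
    rw [div_pow, div_le_div_iff₀ hchoosen hpow]
    have : (z.choose s : ℝ) * (n:ℝ) ^ s ≤ (n.choose s : ℝ) * (z:ℝ) ^ s := by
      exact_mod_cast hN
    linarith
  refine step1.trans ?_
  have h1 : (1 : ℝ) - (k : ℝ) / n = ((n - k : ℕ) : ℝ) / n := by
    have hk : (k:ℝ) ≤ (n:ℝ) := by exact_mod_cast (by omega : k ≤ n)
    rw [Nat.cast_sub (by omega : k ≤ n)]
    field_simp
  rw [h1]
  refine pow_le_pow_left₀ (by positivity) ?_ s
  have : (z:ℝ) ≤ ((n - k : ℕ) : ℝ) := by exact_mod_cast (by omega : z ≤ n - k)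
  exact div_le_div_of_nonneg_right this hnR.le |>.trans_eq rfl

lemma supp_card_ge {F : Type*} [Field F] [DecidableEq F] {n k : ℕ} (a α : Fin n → F)
    (ha : Function.Injective a) (hα : α ≠ 0)
    (hP : ∀ j : Fin k, ∑ i, a i ^ (j : ℕ) * α i = 0) :
    (Finset.univ.filter (fun i => α i = 0)).card + k ≤ n := by
  classical
  set T : Finset (Fin n) := Finset.univ.filter (fun i => α i ≠ 0) with hT
  have hcards : (Finset.univ.filter (fun i => α i = 0)).card + T.card = n := by
    rw [hT]
    have := Finset.card_filter_add_card_filter_not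
      (s := (Finset.univ : Finset (Fin n))) (p := fun i => α i = 0)
    simpa [Finset.card_univ] using this
  set t := T.card with ht
  suffices hkt : k ≤ t by omega
  by_contra hlt
  push_neg at hlt   -- t < k
  have g := T.equivFin.symm
  set f : Fin t → F := fun r => a ((T.equivFin.symm r : {x // x ∈ T}) : Fin n) with hf
  set v : Fin t → F := fun r => α ((T.equivFin.symm r : {x // x ∈ T}) : Fin n) with hv
  have hfinj : Function.Injective f := by
    intro r1 r2 h
    have := ha h
    exact T.equivFin.symm.injective (Subtype.val_injective this)
  have hfv : ∀ i : Fin t, ∑ j : Fin t, v j * f j ^ (i : ℕ) = 0 := by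
    intro i
    have hik : (i : ℕ) < k := lt_of_lt_of_le i.isLt (le_of_lt hlt)
    have h1 : ∑ j : Fin t, v j * f j ^ (i : ℕ)
        = ∑ x ∈ T, α x * a x ^ (i : ℕ) := by
      rw [← Finset.sum_coe_sort T (fun x => α x * a x ^ (i : ℕ))]
      exact Fintype.sum_equiv T.equivFin.symm _ _ (fun r => rfl)
    have h2 : ∑ x ∈ T, α x * a x ^ (i : ℕ) = ∑ x : Fin n, α x * a x ^ (i : ℕ) := by
      refine Finset.sum_subset (Finset.subset_univ T) ?_
      intro x _ hx
      have : α x = 0 := by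
        by_contra hc
        exact hx (by simp [hT, hc])
      rw [this, zero_mul]
    have h3 : ∑ x : Fin n, α x * a x ^ (i : ℕ) = 0 := by
      have := hP ⟨(i : ℕ), hik⟩
      simpa [mul_comm] using this
    rw [h1, h2, h3]
  have hv0 : v = 0 := Matrix.eq_zero_of_forall_pow_sum_mul_pow_eq_zero hfinj hfv
  obtain ⟨i1, hi1⟩ : ∃ i1, α i1 ≠ 0 := by
    by_contra h
    push_neg at h
    exact hα (funext h)
  have hi1T : i1 ∈ T := by simp [hT, hi1]
  have : v (T.equivFin ⟨i1, hi1T⟩) = α i1 := by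
    rw [hv]
    simp
  rw [hv0] at this
  exact hi1 (by simpa using this.symm)

/-- **Noisy Reed–Solomon codewords are small-biased.**  The distribution obtained by taking
a uniform RS codeword (dimension `k`, block length `n ≤ 2^ℓ`, over a field of order `2^ℓ`)
and replacing the coordinates in a uniformly random size-`s` subset by fresh uniform field
elements is `(1 - R)^s`-small-biased, where `R = k/n`. -/
theorem noisy_RS_small_biased (ℓ n k : ℕ) (hkn : k ≤ n) (hn : n ≤ 2 ^ ℓ)
    (F : Type*) [Field F] [Fintype F] [DecidableEq F] (hF : Fintype.card F = 2 ^ ℓ)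
    (a : Fin n → F) (ha : Function.Injective a)
    (s : ℕ) (hs : s ≤ n)
    (α : Fin n → F) (hα : α ≠ 0) :
    bias ℓ n
      (fun w =>
        ∑ m : Fin k → F, ∑ S ∈ Finset.powersetCard s (Finset.univ : Finset (Fin n)),
          ∑ e : Fin n → F,
            ((1 / (Fintype.card F : ℝ) ^ k) * (1 / (n.choose s : ℝ)) *
                (1 / (Fintype.card F : ℝ) ^ n)) *
              (if (fun i => if i ∈ S then e i else rsEnc k n a m i) = w then 1 else 0))
      α ≤ (1 - (k : ℝ) / n) ^ s := by
  classical
  have hn0 : 0 < n := by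
    rcases Nat.eq_zero_or_pos n with h | h
    · exfalso; apply hα; subst h; funext i; exact absurd i.isLt (by omega)
    · exact h
  set q : ℝ := (Fintype.card F : ℝ) with hq
  have hq0 : 0 < q := by
    rw [hq]; exact_mod_cast Fintype.card_pos
  set c : ℝ := (1 / q ^ k) * (1 / (n.choose s : ℝ)) * (1 / q ^ n) with hc
  have hRHS0 : (0:ℝ) ≤ (1 - (k : ℝ) / n) ^ s := by
    have h1 : (k:ℝ) / n ≤ 1 := by
      rw [div_le_one (by exact_mod_cast hn0)]
      exact_mod_cast hkn
    have : (0:ℝ) ≤ 1 - (k:ℝ)/n := by linarith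
    positivity
  set γ : Finset (Fin n) → Fin n → F := fun S i => if i ∈ S then α i else 0 with hγ
  set β : Finset (Fin n) → Fin k → F :=
    fun S j => ∑ i, (if i ∈ S then 0 else a i ^ (j : ℕ) * α i) with hβ
  set P := Finset.powersetCard s (Finset.univ : Finset (Fin n)) with hP
  set Z : Finset (Fin n) := Finset.univ.filter (fun i => α i = 0) with hZ
  -- Step A : collapse the indicator
  have collapse : ∀ w : Fin n → F,
      (∑ x : Fin n → F, c * (if w = x then (1:ℝ) else 0) * chr ℓ (∑ i, x i * α i))
        = c * chr ℓ (∑ i, w i * α i) := by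
    intro w
    rw [Finset.sum_eq_single w]
    · rw [if_pos rfl, mul_one]
    · intro x _ hx
      rw [if_neg (fun h => hx h.symm), mul_zero, zero_mul]
    · intro h; exact absurd (Finset.mem_univ w) h
  have stepA : (∑ x : Fin n → F,
      (∑ m : Fin k → F, ∑ S ∈ P, ∑ e : Fin n → F,
          c * (if (fun i => if i ∈ S then e i else rsEnc k n a m i) = x then (1:ℝ) else 0))
        * chr ℓ (∑ i, x i * α i))
      = ∑ m : Fin k → F, ∑ S ∈ P, ∑ e : Fin n → F,
          c * chr ℓ (∑ i, (if i ∈ S then e i else rsEnc k n a m i) * α i) := by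
    simp only [Finset.sum_mul]
    rw [Finset.sum_comm]
    refine Finset.sum_congr rfl fun m _ => ?_
    rw [Finset.sum_comm]
    refine Finset.sum_congr rfl fun S _ => ?_
    rw [Finset.sum_comm]
    refine Finset.sum_congr rfl fun e _ => ?_
    exact collapse _
  -- Step B : decompose the inner product
  have stepB : ∀ (S : Finset (Fin n)) (m : Fin k → F) (e : Fin n → F),
      (∑ i, (if i ∈ S then e i else rsEnc k n a m i) * α i)
        = (∑ i, e i * γ S i) + (∑ j, m j * β S j) := by
    intro S m e
    have h1 : ∀ i : Fin n, (if i ∈ S then e i else rsEnc k n a m i) * α i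
        = e i * γ S i + (if i ∈ S then (0:F) else rsEnc k n a m i * α i) := by
      intro i; by_cases hi : i ∈ S <;> simp [hγ, hi]
    rw [Finset.sum_congr rfl (fun i _ => h1 i), Finset.sum_add_distrib]
    congr 1
    have h2 : ∀ i : Fin n, (if i ∈ S then (0:F) else rsEnc k n a m i * α i)
        = ∑ j : Fin k, m j * (if i ∈ S then 0 else a i ^ (j:ℕ) * α i) := by
      intro i
      by_cases hi : i ∈ S
      · simp [hi]
      · simp only [if_neg hi, rsEnc, Finset.sum_mul, mul_assoc]
    rw [Finset.sum_congr rfl (fun i _ => h2 i), Finset.sum_comm]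
    refine Finset.sum_congr rfl fun j _ => ?_
    rw [← Finset.mul_sum]
  -- Step C : evaluate the m- and e- sums
  have e_eval : ∀ S : Finset (Fin n),
      (∑ e : Fin n → F, chr ℓ (∑ i, e i * γ S i)) = if γ S = 0 then q ^ n else 0 := by
    intro S
    have := sum_chr hF (γ S)
    simpa [hq, Fintype.card_fin] using this
  have m_eval : ∀ S : Finset (Fin n),
      (∑ m : Fin k → F, chr ℓ (∑ j, m j * β S j)) = if β S = 0 then q ^ k else 0 := by
    intro S
    have := sum_chr hF (β S)
    simpa [hq, Fintype.card_fin] using this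
  have stepC : ∀ S : Finset (Fin n),
      (∑ m : Fin k → F, ∑ e : Fin n → F,
        c * chr ℓ (∑ i, (if i ∈ S then e i else rsEnc k n a m i) * α i))
      = c * ((if β S = 0 then q ^ k else 0) * (if γ S = 0 then q ^ n else 0)) := by
    intro S
    calc ∑ m : Fin k → F, ∑ e : Fin n → F,
          c * chr ℓ (∑ i, (if i ∈ S then e i else rsEnc k n a m i) * α i)
        = ∑ m : Fin k → F, ∑ e : Fin n → F,
            c * (chr ℓ (∑ i, e i * γ S i) * chr ℓ (∑ j, m j * β S j)) := by
          refine Finset.sum_congr rfl fun m _ => Finset.sum_congr rfl fun e _ => ?_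
          rw [stepB S m e, chr_add hF]
      _ = ∑ m : Fin k → F, (c * chr ℓ (∑ j, m j * β S j))
            * ∑ e : Fin n → F, chr ℓ (∑ i, e i * γ S i) := by
          refine Finset.sum_congr rfl fun m _ => ?_
          rw [Finset.mul_sum]
          exact Finset.sum_congr rfl fun e _ => by ring
      _ = (∑ m : Fin k → F, c * chr ℓ (∑ j, m j * β S j)) * (if γ S = 0 then q ^ n else 0) := by
          rw [← Finset.sum_mul, e_eval S]
      _ = c * ((if β S = 0 then q ^ k else 0) * (if γ S = 0 then q ^ n else 0)) := by
          rw [← Finset.mul_sum, m_eval S]; ring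
  -- relate γ to Z and β to the full sum
  have hγZ : ∀ S : Finset (Fin n), γ S = 0 ↔ S ⊆ Z := by
    intro S
    constructor
    · intro h i hiS
      have := congrFun h i
      simp only [hγ, if_pos hiS, Pi.zero_apply] at this
      simp [hZ, this]
    · intro h
      funext i
      by_cases hi : i ∈ S
      · have : α i = 0 := by have := h hi; simpa [hZ] using this
        simp [hγ, hi, this]
      · simp [hγ, hi]
  have hβZ : ∀ S : Finset (Fin n), S ⊆ Z →
      β S = fun j : Fin k => ∑ i, a i ^ (j : ℕ) * α i := by
    intro S hSZ
    funext j
    refine Finset.sum_congr rfl fun i _ => ?_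
    by_cases hi : i ∈ S
    · have : α i = 0 := by have := hSZ hi; simpa [hZ] using this
      simp [hi, this]
    · simp [hi]
  -- put it together
  unfold bias
  rw [stepA, Finset.sum_comm]
  rw [Finset.sum_congr rfl (fun S _ => stepC S)]
  by_cases hcase : ∀ j : Fin k, ∑ i, a i ^ (j : ℕ) * α i = 0
  · -- main case
    have hZcard : Z.card + k ≤ n := by
      have := supp_card_ge a α ha hα hcase
      simpa [hZ] using this
    have hterm : ∀ S ∈ P,
        c * ((if β S = 0 then q ^ k else 0) * (if γ S = 0 then q ^ n else 0))
          = if S ⊆ Z then c * (q ^ k * q ^ n) else 0 := by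
      intro S _
      by_cases hSZ : S ⊆ Z
      · have hβ0 : β S = 0 := by
          rw [hβZ S hSZ]; funext j; exact hcase j
        rw [if_pos hSZ, if_pos ((hγZ S).mpr hSZ), if_pos hβ0]
      · rw [if_neg hSZ, if_neg (fun h => hSZ ((hγZ S).mp h)), mul_zero, mul_zero]
    rw [Finset.sum_congr rfl hterm, ← Finset.sum_filter]
    have hfilter : P.filter (fun S => S ⊆ Z) = Finset.powersetCard s Z := by
      ext T
      simp only [hP, Finset.mem_filter, Finset.mem_powersetCard]
      constructor
      · rintro ⟨⟨_, hcard⟩, hTZ⟩; exact ⟨hTZ, hcard⟩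
      · rintro ⟨hTZ, hcard⟩; exact ⟨⟨Finset.subset_univ T, hcard⟩, hTZ⟩
    rw [hfilter, Finset.sum_const, Finset.card_powersetCard, nsmul_eq_mul]
    have hval : c * (q ^ k * q ^ n) = 1 / (n.choose s : ℝ) := by
      have hC : (n.choose s : ℝ) ≠ 0 := by
        exact_mod_cast (Nat.choose_pos hs).ne'
      rw [hc]
      field_simp
    rw [hval]
    have hchoose_pos : (0:ℝ) < (n.choose s : ℝ) := by exact_mod_cast Nat.choose_pos hs
    rw [abs_of_nonneg (by positivity)]
    have := choose_ratio_le n s Z.card k hn0 hs hZcard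
    calc (Z.card.choose s : ℝ) * (1 / (n.choose s : ℝ))
        = (Z.card.choose s : ℝ) / (n.choose s : ℝ) := by ring
      _ ≤ (1 - (k : ℝ) / n) ^ s := this
  · -- degenerate case : the sum is zero
    push_neg at hcase
    obtain ⟨j0, hj0⟩ := hcase
    have hterm : ∀ S ∈ P,
        c * ((if β S = 0 then q ^ k else 0) * (if γ S = 0 then q ^ n else 0)) = 0 := by
      intro S _
      by_cases hγ0 : γ S = 0
      · have hSZ : S ⊆ Z := (hγZ S).mp hγ0
        have hβne : β S ≠ 0 := by
          rw [hβZ S hSZ]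
          intro h
          exact hj0 (congrFun h j0)
        rw [if_neg hβne, zero_mul, mul_zero]
      · rw [if_neg hγ0, mul_zero, mul_zero]
    rw [Finset.sum_congr rfl hterm, Finset.sum_const_zero, abs_zero]
    exact hRHS0
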